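/- If ρ is separable on H_A ⊗ H_B (a convex combination of product states), then it satisfies the reduction criterion: ρ_A ⊗ I − ρ is positive semidefinite, where ρ_A = Tr_B(ρ). -/

import Mathlib

open ComplexOrder Kronecker Matrix

/-- Kronecker product of positive semidefinite matrices is positive semidefinite. -/
lemma posSemidef_kronecker {m n : Type*} [Fintype m] [Fintype n] [DecidableEq m] [DecidableEq n]
    {A : Matrix m m ℂ} {B : Matrix n n ℂ}
    (hA : A.PosSemidef) (hB : B.PosSemidef) : (A ⊗ₖ B).PosSemidef := by
  exact hA.kronecker hB

/-- The trace of a Hermitian matrix is the sum of its eigenvalues. -/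
lemma trace_eq_sum_eigenvalues {n : Type*} [Fintype n] [DecidableEq n]
    {A : Matrix n n ℂ} (hA : A.IsHermitian) :
    A.trace = ∑ i, (hA.eigenvalues i : ℂ) := by
  conv_lhs => rw [hA.spectral_theorem, Unitary.conjStarAlgAut_apply]
  rw [Matrix.trace_mul_cycle]
  rw [show (star (hA.eigenvectorUnitary : Matrix n n ℂ)) *
      (hA.eigenvectorUnitary : Matrix n n ℂ) = 1 from Unitary.coe_star_mul_self _, one_mul,
    Matrix.trace_diagonal]
  rfl

/-- If `τ` is PSD with trace one, then `1 - τ` is PSD. -/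
lemma one_sub_posSemidef {n : Type*} [Fintype n] [DecidableEq n]
    {τ : Matrix n n ℂ} (h : τ.PosSemidef) (ht : τ.trace = 1) :
    ((1 : Matrix n n ℂ) - τ).PosSemidef := by
  have hH := h.1
  have hnn : ∀ i, 0 ≤ hH.eigenvalues i := h.eigenvalues_nonneg
  have hsum : ∑ i, hH.eigenvalues i = 1 := by
    have := trace_eq_sum_eigenvalues hH
    rw [ht] at this
    have : ((∑ i, hH.eigenvalues i : ℝ) : ℂ) = ((1 : ℝ) : ℂ) := by
      push_cast
      rw [← this]
    exact_mod_cast this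
  have hle : ∀ i, hH.eigenvalues i ≤ 1 := by
    intro i
    calc hH.eigenvalues i ≤ ∑ j, hH.eigenvalues j :=
          Finset.single_le_sum (fun j _ => hnn j) (Finset.mem_univ i)
      _ = 1 := hsum
  set U : Matrix n n ℂ := (hH.eigenvectorUnitary : Matrix n n ℂ) with hU
  have hUU : U * star U = 1 := Unitary.coe_mul_star_self _
  have key : (1 : Matrix n n ℂ) - τ =
      U * Matrix.diagonal (fun i => (1 : ℂ) - (hH.eigenvalues i : ℂ)) * Uᴴ := by
    have hspec := hH.spectral_theorem
    rw [Unitary.conjStarAlgAut_apply] at hspec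
    have hdiag : Matrix.diagonal (fun i => (1 : ℂ) - (hH.eigenvalues i : ℂ)) =
        1 - Matrix.diagonal (RCLike.ofReal ∘ hH.eigenvalues) := by
      rw [← Matrix.diagonal_one, Matrix.diagonal_sub]
      rfl
    rw [hdiag, Matrix.mul_sub, Matrix.sub_mul, mul_one, ← Matrix.star_eq_conjTranspose, hUU,
      hU, ← hspec]
  rw [key]
  apply Matrix.PosSemidef.mul_mul_conjTranspose_same
  refine Matrix.posSemidef_diagonal_iff.mpr fun i => ?_
  have : (0 : ℝ) ≤ 1 - hH.eigenvalues i := by linarith [hle i]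
  have h2 : ((0 : ℝ) : ℂ) ≤ (((1 - hH.eigenvalues i : ℝ)) : ℂ) := by
    exact_mod_cast Complex.real_le_real.mpr this
  simpa using h2

/-- Nonnegative real scalar multiple of a PSD matrix is PSD. -/
lemma posSemidef_real_smul {n : Type*} [Fintype n] {A : Matrix n n ℂ}
    (hA : A.PosSemidef) {c : ℝ} (hc : 0 ≤ c) : ((c : ℂ) • A).PosSemidef := by
  constructor
  · unfold Matrix.IsHermitian
    rw [Matrix.conjTranspose_smul, hA.1.eq]
    congr 1
    simp
  · intro x
    have := hA.2 x
    convert mul_nonneg (by exact_mod_cast Complex.real_le_real.mpr hc : (0 : ℂ) ≤ (c : ℂ)) this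
      using 1
    rw [Finsupp.mul_sum]
    refine Finsupp.sum_congr fun i _ => ?_
    rw [Finsupp.mul_sum]
    refine Finsupp.sum_congr fun j _ => ?_
    simp only [Matrix.smul_apply, smul_eq_mul]
    ring

set_option maxHeartbeats 1600000 in
/-- If `ρ` is separable on `H_A ⊗ H_B` (a convex combination of product density
operators), then it satisfies the reduction criterion: `ρ_A ⊗ I − ρ` is positive
semidefinite, where `ρ_A = Tr_B(ρ)`. -/
theorem separable_satisfies_reduction_criterion (dA dB : ℕ)
    (ρ : Matrix (Fin dA × Fin dB) (Fin dA × Fin dB) ℂ)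
    (hsep : ∃ (k : ℕ) (p : Fin k → ℝ)
        (σ : Fin k → Matrix (Fin dA) (Fin dA) ℂ)
        (τ : Fin k → Matrix (Fin dB) (Fin dB) ℂ),
      (∀ i, 0 ≤ p i) ∧ (∑ i, p i = 1) ∧
      (∀ i, (σ i).PosSemidef ∧ (σ i).trace = 1) ∧
      (∀ i, (τ i).PosSemidef ∧ (τ i).trace = 1) ∧
      ρ = ∑ i, ((p i : ℂ)) • (σ i ⊗ₖ τ i)) :
    let ρA : Matrix (Fin dA) (Fin dA) ℂ :=
      Matrix.of fun x y => ∑ j : Fin dB, ρ (x, j) (y, j)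
    ((ρA ⊗ₖ (1 : Matrix (Fin dB) (Fin dB) ℂ)) - ρ).PosSemidef := by
  intro ρA
  obtain ⟨k, p, σ, τ, hp, hps, hσ, hτ, hρ⟩ := hsep
  have key : (ρA ⊗ₖ (1 : Matrix (Fin dB) (Fin dB) ℂ)) - ρ =
      ∑ i, (p i : ℂ) • (σ i ⊗ₖ ((1 : Matrix (Fin dB) (Fin dB) ℂ) - τ i)) := by
    ext ⟨a, b⟩ ⟨c, d⟩
    have htr : ∀ i, ∑ j, τ i j j = 1 := fun i => (hτ i).2
    simp only [Matrix.sub_apply, Matrix.kroneckerMap_apply, Matrix.sum_apply,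
      Matrix.smul_apply, hρ, Matrix.one_apply, ρA, Matrix.of_apply, smul_eq_mul]
    rw [Finset.sum_comm, Finset.sum_mul, ← Finset.sum_sub_distrib]
    refine Finset.sum_congr rfl fun i _ => ?_
    have hterm : ∑ x : Fin dB, (p i : ℂ) * (σ i a c * τ i x x)
        = (p i : ℂ) * σ i a c := by
      rw [← Finset.mul_sum, ← Finset.mul_sum, htr i, mul_one]
    rw [hterm]
    ring
  rw [key]
  apply Finset.sum_induction _ Matrix.PosSemidef
    (fun _ _ ha hb => ha.add hb) Matrix.PosSemidef.zero
  intro i _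
  exact posSemidef_real_smul
    (posSemidef_kronecker (hσ i).1 (one_sub_posSemidef (hτ i).1 (hτ i).2)) (hp i)
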